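/- Let V be a normed real vector space and α a bounded alternating k-linear form on V with operator norm ‖α‖. Suppose v₁,…,v_k are unit vectors, each decomposed as v_i = v_i^P + v_i^T, and suppose T : V → V is a linear map satisfying ‖T(v_i^P)‖ ≤ e^{-t}‖v_i^P‖ and ‖T(v_i^T)‖ ≤ ‖v_i^T‖ with ‖v_i^P‖ ≤ 1, ‖v_i^T‖ ≤ 1 for all i, and suppose α(T e₁, …, T e_k) = 0 whenever at least two of the e_j equal v_j^T. Then |α(T v₁, …, T v_k)| ≤ e^{-(k-1)t}(k + e^{-t})‖α‖. -/

import Mathlib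

/-- The multilinear estimate: for a bounded alternating `k`-form `α`, unit vectors
`v i = vP i + vT i` with `‖T (vP i)‖ ≤ e^{-t} ‖vP i‖`, `‖T (vT i)‖ ≤ ‖vT i‖`,
`‖vP i‖ ≤ 1`, `‖vT i‖ ≤ 1`, and `α` vanishing on the images under `T` of tuples
with at least two tangential entries, one has
`|α (T v₁, …, T v_k)| ≤ e^{-(k-1)t} (k + e^{-t}) ‖α‖`. -/
theorem abs_alternating_apply_le_of_decomposition
    {V : Type*} [NormedAddCommGroup V] [NormedSpace ℝ V]
    {k : ℕ} (hk : 2 ≤ k) (α : ContinuousMultilinearMap ℝ (fun _ : Fin k => V) ℝ)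
    (halt : ∀ (w : Fin k → V) (i j : Fin k), i ≠ j → w i = w j → α w = 0)
    (v vP vT : Fin k → V) (T : V →ₗ[ℝ] V) (t : ℝ) (ht : 0 ≤ t)
    (hdecomp : ∀ i, v i = vP i + vT i)
    (hunit : ∀ i, ‖v i‖ = 1)
    (hP : ∀ i, ‖T (vP i)‖ ≤ Real.exp (-t) * ‖vP i‖)
    (hT : ∀ i, ‖T (vT i)‖ ≤ ‖vT i‖)
    (hPle : ∀ i, ‖vP i‖ ≤ 1) (hTle : ∀ i, ‖vT i‖ ≤ 1)
    (hvanish : ∀ e : Fin k → V, (∀ i, e i = vP i ∨ e i = vT i) →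
      (∃ i j, i ≠ j ∧ e i = vT i ∧ e j = vT j) → α (fun i => T (e i)) = 0) :
    |α (fun i => T (v i))| ≤
      Real.exp (-((k : ℝ) - 1) * t) * ((k : ℝ) + Real.exp (-t)) * ‖α‖ := by
  classical
  set c := Real.exp (-t) with hc
  have hc0 : 0 < c := Real.exp_pos _
  have hc1 : c ≤ 1 := Real.exp_le_one_iff.2 (by linarith)
  -- the summand indexed by a subset S (taking `vP` on S, `vT` off S)
  set f : Finset (Fin k) → ℝ :=
    fun S => α (fun i => T (S.piecewise vP vT i)) with hf
  -- expand multilinearly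
  have hexp : α (fun i => T (v i)) = ∑ S : Finset (Fin k), f S := by
    have h1 : (fun i => T (v i)) =
        (fun i => T (vP i)) + (fun i => T (vT i)) := by
      funext i; simp [hdecomp i]
    rw [h1]
    refine (α.toMultilinearMap.map_add_univ _ _).trans ?_
    refine Finset.sum_congr rfl fun S _ => ?_
    have harg : S.piecewise (fun i => T (vP i)) (fun i => T (vT i))
        = fun i => T (S.piecewise vP vT i) := by
      funext i
      by_cases h : i ∈ S <;> simp [Finset.piecewise, h]
    rw [harg]
    rfl
  -- each term has |f S| ≤ ‖α‖ * ∏ norms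
  have hbound : ∀ S : Finset (Fin k),
      |f S| ≤ ‖α‖ * ∏ i, ‖T (S.piecewise vP vT i)‖ := by
    intro S
    have := α.le_opNorm (fun i => T (S.piecewise vP vT i))
    simpa [Real.norm_eq_abs, hf] using this
  -- norm bounds per coordinate
  have hnP : ∀ i, ‖T (vP i)‖ ≤ c := fun i =>
    (hP i).trans (by nlinarith [hPle i, norm_nonneg (vP i)])
  have hnT : ∀ i, ‖T (vT i)‖ ≤ 1 := fun i => (hT i).trans (hTle i)
  -- the "all perpendicular" term
  have hterm_univ : |f Finset.univ| ≤ ‖α‖ * c ^ k := by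
    refine (hbound Finset.univ).trans ?_
    refine mul_le_mul_of_nonneg_left ?_ (norm_nonneg α)
    calc ∏ i, ‖T ((Finset.univ : Finset (Fin k)).piecewise vP vT i)‖
        ≤ ∏ _i : Fin k, c := by
          refine Finset.prod_le_prod (fun i _ => norm_nonneg _) fun i _ => ?_
          simpa using hnP i
      _ = c ^ k := by simp
  -- the "one tangential" terms
  have hterm_erase : ∀ j : Fin k, |f (Finset.univ.erase j)| ≤ ‖α‖ * c ^ (k - 1) := by
    intro j
    refine (hbound _).trans ?_
    refine mul_le_mul_of_nonneg_left ?_ (norm_nonneg α)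
    have : ∏ i, ‖T ((Finset.univ.erase j).piecewise vP vT i)‖ ≤
        ∏ i, (if i = j then (1 : ℝ) else c) := by
      refine Finset.prod_le_prod (fun i _ => norm_nonneg _) fun i _ => ?_
      by_cases h : i = j
      · subst h
        simp only [Finset.piecewise, Finset.mem_erase, ne_eq, not_true_eq_false,
          false_and, if_false, if_pos rfl]
        exact hnT i
      · simp only [Finset.piecewise, Finset.mem_erase, ne_eq, h, not_false_eq_true,
          true_and, Finset.mem_univ, if_true, if_neg h]
        exact hnP i
    refine this.trans ?_
    rw [← Finset.mul_prod_erase Finset.univ _ (Finset.mem_univ j)]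
    have : ∏ i ∈ Finset.univ.erase j, (if i = j then (1 : ℝ) else c)
        = ∏ _i ∈ Finset.univ.erase j, c := by
      refine Finset.prod_congr rfl fun i hi => ?_
      simp [Finset.ne_of_mem_erase hi]
    rw [if_pos rfl, this, Finset.prod_const, one_mul,
      Finset.card_erase_of_mem (Finset.mem_univ j), Finset.card_univ, Fintype.card_fin]
  -- vanishing terms
  have hzero : ∀ S : Finset (Fin k), S ≠ Finset.univ →
      (∀ j, S ≠ Finset.univ.erase j) → f S = 0 := by
    intro S hS1 hS2
    have hcard : 1 < Sᶜ.card := by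
      rcases Nat.lt_or_ge 1 Sᶜ.card with h | h
      · exact h
      · exfalso
        interval_cases h' : Sᶜ.card
        · exact hS1 (by simpa using (Finset.card_eq_zero.1 h' : Sᶜ = ∅))
        · obtain ⟨j, hj⟩ := Finset.card_eq_one.1 h'
          refine hS2 j ?_
          have : Sᶜᶜ = ({j} : Finset (Fin k))ᶜ := by rw [hj]
          simpa [Finset.compl_singleton] using this
    obtain ⟨i, hi, j, hj, hij⟩ := Finset.one_lt_card.1 hcard
    refine hvanish (S.piecewise vP vT) (fun i => ?_) ⟨i, j, hij, ?_, ?_⟩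
    · by_cases h : i ∈ S <;> simp [Finset.piecewise, h]
    · simp [Finset.piecewise, Finset.mem_compl.1 hi]
    · simp [Finset.piecewise, Finset.mem_compl.1 hj]
  -- assemble
  have hsub : ∑ S : Finset (Fin k), f S =
      ∑ S ∈ insert Finset.univ (Finset.univ.image fun j : Fin k => Finset.univ.erase j),
        f S := by
    refine (Finset.sum_subset (Finset.subset_univ _) ?_).symm
    intro S _ hS
    simp only [Finset.mem_insert, Finset.mem_image, Finset.mem_univ, true_and,
      not_or, not_exists] at hS
    exact hzero S hS.1 fun j => fun h => hS.2 j h.symm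
  have hnotmem : (Finset.univ : Finset (Fin k)) ∉
      Finset.univ.image fun j : Fin k => Finset.univ.erase j := by
    simp only [Finset.mem_image, Finset.mem_univ, true_and, not_exists]
    intro j h
    have := Finset.mem_univ j
    rw [← h] at this
    exact (Finset.mem_erase.1 this).1 rfl
  have hinj : ∀ a ∈ (Finset.univ : Finset (Fin k)), ∀ b ∈ Finset.univ,
      Finset.univ.erase a = Finset.univ.erase b → a = b := by
    intro a _ b _ h
    by_contra hab
    have h1 : a ∈ Finset.univ.erase b := Finset.mem_erase.2 ⟨hab, Finset.mem_univ a⟩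
    rw [← h] at h1
    exact (Finset.mem_erase.1 h1).1 rfl
  have himg : ∑ S ∈ Finset.univ.image (fun j : Fin k => Finset.univ.erase j), f S =
      ∑ j : Fin k, f (Finset.univ.erase j) := Finset.sum_image hinj
  have hck : Real.exp (-((k : ℝ) - 1) * t) = c ^ (k - 1) := by
    rw [hc, ← Real.exp_nat_mul]
    congr 1
    rw [Nat.cast_sub (by omega : 1 ≤ k)]
    push_cast
    ring
  have hpow : c ^ k = c ^ (k - 1) * c := by
    rw [← pow_succ]
    congr 1
    omega
  calc |α (fun i => T (v i))|
      = |f Finset.univ + ∑ S ∈ Finset.univ.image (fun j : Fin k => Finset.univ.erase j), f S| := by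
        rw [hexp, hsub, Finset.sum_insert hnotmem]
    _ ≤ |f Finset.univ| + |∑ S ∈ Finset.univ.image (fun j : Fin k => Finset.univ.erase j), f S| :=
        abs_add_le _ _
    _ ≤ |f Finset.univ| + ∑ j : Fin k, |f (Finset.univ.erase j)| := by
        rw [himg]
        exact add_le_add_right (Finset.abs_sum_le_sum_abs _ _) _
    _ ≤ ‖α‖ * c ^ k + ∑ _j : Fin k, ‖α‖ * c ^ (k - 1) := by
        exact add_le_add hterm_univ (Finset.sum_le_sum fun j _ => hterm_erase j)
    _ = ‖α‖ * c ^ k + (k : ℝ) * (‖α‖ * c ^ (k - 1)) := by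
        rw [Finset.sum_const, Finset.card_univ, Fintype.card_fin, nsmul_eq_mul]
    _ = Real.exp (-((k : ℝ) - 1) * t) * ((k : ℝ) + c) * ‖α‖ := by
        rw [hck, hpow]; ring
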